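/- For any game ν on N and every y ∈ ℝ, P(Y_ν ≤ y) = (1/n!) · Σ_{σ ∈ 𝔖_n} P(Y_ν^σ ≤ y). -/

import Mathlib

open MeasureTheory ProbabilityTheory Finset

noncomputable section

namespace ChoquetPaper

variable {n : ℕ} {Ω : Type*}

/-- `ν_i^σ := ν({σ(1),…,σ(i)})` (here `i : ℕ`, `0 ≤ i ≤ n`). -/
def nuSig (ν : Finset (Fin n) → ℝ) (σ : Equiv.Perm (Fin n)) (i : ℕ) : ℝ :=
  ν ((Finset.univ.filter (fun j : Fin n => (j : ℕ) < i)).image σ)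

/-- The Choquet sum `Σ_{i=1}^n p_i^{ν,σ} x_{σ(i)}` w.r.t. a fixed permutation `σ`. -/
def choquetPerm (ν : Finset (Fin n) → ℝ) (σ : Equiv.Perm (Fin n)) (x : Fin n → ℝ) : ℝ :=
  ∑ i : Fin n, (nuSig ν σ ((i : ℕ) + 1) - nuSig ν σ (i : ℕ)) * x (σ i)

/-- A permutation `σ` such that `x_{σ(1)} ≥ ⋯ ≥ x_{σ(n)}`. -/
def sortDesc (x : Fin n → ℝ) : Equiv.Perm (Fin n) :=
  (Fin.revPerm).trans (Tuple.sort x)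

/-- The discrete Choquet integral `C_ν(x)`. -/
def choquet (ν : Finset (Fin n) → ℝ) (x : Fin n → ℝ) : ℝ :=
  choquetPerm ν (sortDesc x) x

/-- The `i`-th order statistic `X_{i:n}` (1-based), with the convention `X_{0:n} := 0`. -/
def orderStat (X : Fin n → Ω → ℝ) (i : ℕ) (ω : Ω) : ℝ :=
  if h : i - 1 < n ∧ 1 ≤ i then X (Tuple.sort (fun j => X j ω) ⟨i - 1, h.1⟩) ω else 0

/-- `Y_ν^σ := Σ_{i=1}^n p_i^{ν,σ} X_{n−i+1:n}`. -/
def Ysig (ν : Finset (Fin n) → ℝ) (σ : Equiv.Perm (Fin n)) (X : Fin n → Ω → ℝ) (ω : Ω) : ℝ :=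
  ∑ i : Fin n, (nuSig ν σ ((i : ℕ) + 1) - nuSig ν σ (i : ℕ)) * orderStat X (n - (i : ℕ)) ω

/-- plus truncated power function -/
def tpowPos (t : ℝ) (m : ℕ) : ℝ := if 0 < t then t ^ m else 0

/-- minus truncated power function -/
def tpowNeg (t : ℝ) (m : ℕ) : ℝ := if t < 0 then t ^ m else 0

/-- divided difference at pairwise distinct points indexed by a finite set -/
def ddiff {ι : Type*} [DecidableEq ι] (g : ℝ → ℝ) (s : Finset ι) (a : ι → ℝ) : ℝ :=
  ∑ i ∈ s, g (a i) / ∏ j ∈ s.erase i, (a i - a j)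


/-! ### auxiliary -/

/-- `j`-th sorted value of a tuple. -/
def sval (j : Fin n) (x : Fin n → ℝ) : ℝ := x (Tuple.sort x j)

lemma sval_comp (τ : Equiv.Perm (Fin n)) (x : Fin n → ℝ) (j : Fin n) :
    sval j (x ∘ τ) = sval j x :=
  congrFun (Tuple.comp_perm_comp_sort_eq_comp_sort (f := x) (σ := τ)) j

/-- set where the sorting permutation equals `π` -/
def sortSet (π : Equiv.Perm (Fin n)) : Set (Fin n → ℝ) := {x | Tuple.sort x = π}

lemma measurableSet_sortSet (π : Equiv.Perm (Fin n)) : MeasurableSet (sortSet π) := by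
  have h : sortSet π =
      (⋂ (i : Fin n) (j : Fin n) (_ : i ≤ j), {x : Fin n → ℝ | x (π i) ≤ x (π j)}) ∩
      (⋂ (i : Fin n) (j : Fin n) (_ : i < j) (_ : ¬ π i < π j),
        {x : Fin n → ℝ | x (π i) ≠ x (π j)}) := by
    ext x
    simp only [sortSet, Set.mem_setOf_eq, Set.mem_inter_iff, Set.mem_iInter]
    rw [show (Tuple.sort x = π) ↔ (π = Tuple.sort x) from eq_comm, Tuple.eq_sort_iff]
    constructor
    · rintro ⟨h1, h2⟩
      refine ⟨fun i j hij => h1 hij, fun i j hij hne heq => hne (h2 i j hij heq)⟩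
    · rintro ⟨h1, h2⟩
      refine ⟨fun i j hij => h1 _ _ hij, fun i j hij heq => ?_⟩
      by_contra hlt
      exact h2 i j hij hlt heq
  rw [h]
  refine MeasurableSet.inter ?_ ?_
  · exact MeasurableSet.iInter fun i => MeasurableSet.iInter fun j =>
      MeasurableSet.iInter fun _ =>
        measurableSet_le (measurable_pi_apply _) (measurable_pi_apply _)
  · exact MeasurableSet.iInter fun i => MeasurableSet.iInter fun j =>
      MeasurableSet.iInter fun _ => MeasurableSet.iInter fun _ => by
        have := (measurableSet_eq_fun (f := fun x : Fin n → ℝ => x (π i))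
          (g := fun x : Fin n → ℝ => x (π j)) (measurable_pi_apply (π i))
          (measurable_pi_apply (π j))).compl
        simpa [Set.compl_setOf] using this

lemma measurable_sval (j : Fin n) : Measurable (sval j : (Fin n → ℝ) → ℝ) := by
  have h : (sval j : (Fin n → ℝ) → ℝ) =
      fun x => ∑ π : Equiv.Perm (Fin n), (sortSet π).indicator (fun x => x (π j)) x := by
    ext x
    rw [Finset.sum_eq_single (Tuple.sort x)]
    · simp [Set.indicator, sortSet, sval]
    · intro π _ hne
      exact Set.indicator_of_notMem (fun h => hne h.symm) _
    · simp
  rw [h]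
  exact Finset.measurable_sum _ fun π _ =>
    (measurable_pi_apply _).indicator (measurableSet_sortSet π)

def ostat (i : ℕ) (x : Fin n → ℝ) : ℝ :=
  if h : i - 1 < n ∧ 1 ≤ i then sval ⟨i - 1, h.1⟩ x else 0

lemma orderStat_eq (X : Fin n → Ω → ℝ) (i : ℕ) (ω : Ω) :
    orderStat X i ω = ostat i (fun j => X j ω) := rfl

lemma measurable_ostat (i : ℕ) : Measurable (ostat i : (Fin n → ℝ) → ℝ) := by
  unfold ostat
  split_ifs with h
  · exact measurable_sval _
  · exact measurable_const

lemma ostat_comp (τ : Equiv.Perm (Fin n)) (x : Fin n → ℝ) (i : ℕ) :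
    ostat i (x ∘ τ) = ostat i x := by
  unfold ostat
  split_ifs with h
  · exact sval_comp τ x _
  · rfl

def Fsig (ν : Finset (Fin n) → ℝ) (σ : Equiv.Perm (Fin n)) (x : Fin n → ℝ) : ℝ :=
  ∑ i : Fin n, (nuSig ν σ ((i : ℕ) + 1) - nuSig ν σ (i : ℕ)) * ostat (n - (i : ℕ)) x

lemma Ysig_eq (ν : Finset (Fin n) → ℝ) (σ : Equiv.Perm (Fin n)) (X : Fin n → Ω → ℝ) (ω : Ω) :
    Ysig ν σ X ω = Fsig ν σ (fun j => X j ω) := rfl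

lemma measurable_Fsig (ν : Finset (Fin n) → ℝ) (σ : Equiv.Perm (Fin n)) :
    Measurable (Fsig ν σ) :=
  Finset.measurable_sum _ fun i _ => (measurable_ostat _).const_mul _

lemma Fsig_comp (ν : Finset (Fin n) → ℝ) (σ τ : Equiv.Perm (Fin n)) (x : Fin n → ℝ) :
    Fsig ν σ (x ∘ τ) = Fsig ν σ x := by
  unfold Fsig
  exact Finset.sum_congr rfl fun i _ => by rw [ostat_comp]

lemma choquet_eq_Fsig (ν : Finset (Fin n) → ℝ) (x : Fin n → ℝ) :
    choquet ν x = Fsig ν (sortDesc x) x := by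
  unfold choquet choquetPerm Fsig
  refine Finset.sum_congr rfl fun i _ => ?_
  congr 1
  have hi : (i : ℕ) < n := i.isLt
  have h1 : 1 ≤ n - (i : ℕ) := by omega
  have h2 : n - (i : ℕ) - 1 < n := by omega
  rw [ostat, dif_pos ⟨h2, h1⟩]
  unfold sval sortDesc
  suffices h : (Fin.revPerm.trans (Tuple.sort x)) i = Tuple.sort x ⟨n - (i : ℕ) - 1, h2⟩ by
    rw [h]
  simp only [Equiv.trans_apply, Fin.revPerm_apply]
  congr 1

lemma sort_comp_of_injective {x : Fin n → ℝ} (hx : Function.Injective x)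
    (τ : Equiv.Perm (Fin n)) :
    Tuple.sort (x ∘ τ) = (Tuple.sort x).trans τ⁻¹ := by
  refine (Tuple.eq_sort_iff.mpr ⟨?_, ?_⟩).symm
  · have h : (x ∘ τ) ∘ ⇑((Tuple.sort x).trans τ⁻¹) = x ∘ Tuple.sort x := by
      ext j; simp [Equiv.trans_apply]
    rw [h]
    exact Tuple.monotone_sort x
  · intro i j hij heq
    exfalso
    have : ((Tuple.sort x).trans τ⁻¹) i = ((Tuple.sort x).trans τ⁻¹) j := by
      apply τ.injective
      apply hx
      simpa [Equiv.trans_apply] using heq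
    have := ((Tuple.sort x).trans τ⁻¹).injective.eq_iff.mp this
    omega

lemma sortDesc_comp_of_injective {x : Fin n → ℝ} (hx : Function.Injective x)
    (τ : Equiv.Perm (Fin n)) :
    sortDesc (x ∘ τ) = (sortDesc x).trans τ⁻¹ := by
  unfold sortDesc
  rw [sort_comp_of_injective hx τ, Equiv.trans_assoc]


/-- `P(Y_ν ≤ y) = (1/n!) · Σ_{σ ∈ 𝔖_n} P(Y_ν^σ ≤ y)`. -/
theorem statement1 {Ω : Type*} [MeasurableSpace Ω] {n : ℕ} (hn : 0 < n)
    (P : Measure Ω) [IsProbabilityMeasure P]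
    (ν : Finset (Fin n) → ℝ) (hν0 : ν ∅ = 0) (hν01 : ∀ T, ν T ∈ Set.Icc (0:ℝ) 1)
    (X : Fin n → Ω → ℝ) (hmeas : ∀ i, Measurable (X i))
    (hindep : iIndepFun X P)
    (μ : Measure ℝ) (hac : μ ≪ volume) (hdist : ∀ i, Measure.map (X i) P = μ)
    (y : ℝ) :
    (P {ω | choquet ν (fun i => X i ω) ≤ y}).toReal
      = (1 / (Nat.factorial n : ℝ)) *
          ∑ σ : Equiv.Perm (Fin n), (P {ω | Ysig ν σ X ω ≤ y}).toReal := by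
  classical
  -- basic setup
  set φ : Ω → (Fin n → ℝ) := fun ω i => X i ω with hφdef
  have hφ : Measurable φ := measurable_pi_lambda _ hmeas
  haveI hμprob : IsProbabilityMeasure μ := by
    rw [← hdist ⟨0, hn⟩]
    exact Measure.isProbabilityMeasure_map (hmeas _).aemeasurable
  set Q : Measure (Fin n → ℝ) := Measure.pi (fun _ : Fin n => μ) with hQdef
  -- the law of the sample vector is the product measure
  have hQ : Q = P.map φ := by
    refine Measure.pi_eq fun s hs => ?_
    rw [Measure.map_apply hφ (MeasurableSet.univ_pi hs)]
    have hpre : φ ⁻¹' (Set.pi Set.univ s) = ⋂ i ∈ Finset.univ, X i ⁻¹' s i := by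
      ext ω; simp [hφdef, Set.mem_pi]
    rw [hpre, hindep.measure_inter_preimage_eq_mul Finset.univ (fun i _ => hs i)]
    refine Finset.prod_congr rfl fun i _ => ?_
    rw [← hdist i, Measure.map_apply (hmeas i) (hs i)]
  haveI : IsProbabilityMeasure Q := by
    have h := Measure.isProbabilityMeasure_map (μ := P) hφ.aemeasurable
    rwa [← hQ] at h
  -- the relevant sets in the sample space
  set B : Equiv.Perm (Fin n) → Set (Fin n → ℝ) := fun σ => {x | sortDesc x = σ} with hBdef
  set C : Equiv.Perm (Fin n) → Set (Fin n → ℝ) := fun σ => {x | Fsig ν σ x ≤ y} with hCdef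
  set D : Set (Fin n → ℝ) := {x | Function.Injective x} with hDdef
  have hBmeas : ∀ σ, MeasurableSet (B σ) := by
    intro σ
    have h : B σ = sortSet (Fin.revPerm.symm.trans σ) := by
      ext x
      simp only [hBdef, sortSet, Set.mem_setOf_eq, sortDesc]
      constructor
      · intro h; rw [← h]; ext i; simp
      · intro h; rw [h]; ext i; simp
    rw [h]; exact measurableSet_sortSet _
  have hCmeas : ∀ σ, MeasurableSet (C σ) :=
    fun σ => measurableSet_le (measurable_Fsig ν σ) measurable_const
  have hDmeas : MeasurableSet D := by
    have h : D = ⋂ (i : Fin n) (j : Fin n) (_ : i ≠ j), {x : Fin n → ℝ | x i = x j}ᶜ := by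
      ext x
      simp only [hDdef, Set.mem_setOf_eq, Set.mem_iInter, Set.mem_compl_iff, Function.Injective]
      constructor
      · intro h i j hij heq; exact hij (h heq)
      · intro h i j heq; by_contra hne; exact h i j hne heq
    rw [h]
    exact MeasurableSet.iInter fun i => MeasurableSet.iInter fun j =>
      MeasurableSet.iInter fun _ =>
        (measurableSet_eq_fun (measurable_pi_apply i) (measurable_pi_apply j)).compl
  -- almost surely the sample values are pairwise distinct
  have hDc : Q Dᶜ = 0 := by
    have hsub : Dᶜ ⊆ ⋃ (i : Fin n) (j : Fin n) (_ : i ≠ j), {x : Fin n → ℝ | x i = x j} := by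
      intro x hx
      simp only [hDdef, Set.mem_compl_iff, Set.mem_setOf_eq, Function.Injective] at hx
      push_neg at hx
      obtain ⟨i, j, hij, hne⟩ := hx
      simp only [Set.mem_iUnion]
      exact ⟨i, j, hne, hij⟩
    refine measure_mono_null hsub ?_
    refine measure_iUnion_null fun i => measure_iUnion_null fun j =>
      measure_iUnion_null fun hij => ?_
    have hmset : MeasurableSet {x : Fin n → ℝ | x i = x j} :=
      measurableSet_eq_fun (measurable_pi_apply i) (measurable_pi_apply j)
    rw [hQ, Measure.map_apply hφ hmset]
    have hpre : φ ⁻¹' {x : Fin n → ℝ | x i = x j}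
        = (fun ω => (X i ω, X j ω)) ⁻¹' {p : ℝ × ℝ | p.1 = p.2} := by
      ext ω; simp [hφdef]
    have hindij : IndepFun (X i) (X j) P := hindep.indepFun hij
    have hmapij : P.map (fun ω => (X i ω, X j ω)) = μ.prod μ := by
      have h := (indepFun_iff_map_prod_eq_prod_map_map (hmeas i).aemeasurable
        (hmeas j).aemeasurable).mp hindij
      rw [hdist i, hdist j] at h
      exact h
    have hdiag : MeasurableSet {p : ℝ × ℝ | p.1 = p.2} :=
      measurableSet_eq_fun measurable_fst measurable_snd
    rw [hpre, ← Measure.map_apply ((hmeas i).prodMk (hmeas j)) hdiag, hmapij,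
      Measure.prod_apply hdiag]
    have h1 : ∀ a : ℝ, Prod.mk a ⁻¹' {p : ℝ × ℝ | p.1 = p.2} = {a} := by
      intro a; ext b; simp [eq_comm]
    have h2 : ∀ a : ℝ, μ {a} = 0 := fun a => hac Real.volume_singleton
    simp only [h1, h2, lintegral_zero]
  have hrestrict : ∀ S : Set (Fin n → ℝ), Q (S ∩ D) = Q S := by
    intro S
    refine le_antisymm (measure_mono Set.inter_subset_left) ?_
    calc Q S ≤ Q ((S ∩ D) ∪ Dᶜ) := by
          refine measure_mono fun x hx => ?_
          by_cases h : x ∈ D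
          · exact Or.inl ⟨hx, h⟩
          · exact Or.inr h
      _ ≤ Q (S ∩ D) + Q Dᶜ := measure_union_le _ _
      _ = Q (S ∩ D) := by rw [hDc, add_zero]
  -- invariance of the product measure under permutations of coordinates
  have hTmeas : ∀ τ : Equiv.Perm (Fin n), Measurable (fun x : Fin n → ℝ => x ∘ τ) :=
    fun τ => measurable_pi_lambda _ fun i => measurable_pi_apply _
  have hT : ∀ τ : Equiv.Perm (Fin n), Q.map (fun x => x ∘ τ) = Q := by
    intro τ
    refine Eq.trans ?_ hQdef.symm
    refine (Measure.pi_eq fun s hs => ?_).symm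
    rw [Measure.map_apply (hTmeas τ) (MeasurableSet.univ_pi hs)]
    have hpre : (fun x : Fin n → ℝ => x ∘ τ) ⁻¹' Set.pi Set.univ s
        = Set.pi Set.univ (fun j => s (τ⁻¹ j)) := by
      ext x
      simp only [Set.mem_preimage, Set.mem_pi, Set.mem_univ, true_implies, Function.comp_apply]
      constructor
      · intro h j
        have := h (τ⁻¹ j)
        simpa using this
      · intro h i
        have := h (τ i)
        simpa using this
    rw [hpre, hQdef, Measure.pi_pi]
    exact Equiv.prod_comp τ⁻¹ (fun j => μ (s j))
  -- summing over the ranking events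
  have hBunion : ∀ S : Set (Fin n → ℝ), MeasurableSet S →
      ∑ ρ : Equiv.Perm (Fin n), Q (B ρ ∩ S) = Q S := by
    intro S hS
    have hdisj : Set.PairwiseDisjoint (↑(Finset.univ : Finset (Equiv.Perm (Fin n))))
        (fun ρ => B ρ ∩ S) := by
      intro ρ _ ρ' _ hne
      refine Set.disjoint_left.mpr fun x hx hx' => ?_
      exact hne (hx.1.symm.trans hx'.1)
    have hcup : ⋃ ρ ∈ (Finset.univ : Finset (Equiv.Perm (Fin n))), (B ρ ∩ S) = S := by
      ext x
      constructor
      · intro hx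
        simp only [Set.mem_iUnion] at hx
        obtain ⟨ρ, _, hρ⟩ := hx
        exact hρ.2
      · intro hx
        simp only [Set.mem_iUnion]
        exact ⟨sortDesc x, Finset.mem_univ _, rfl, hx⟩
    rw [← measure_biUnion_finset hdisj (fun ρ _ => (hBmeas ρ).inter hS), hcup]
  -- the exchange identity
  have key : ∀ σ : Equiv.Perm (Fin n),
      (Nat.factorial n : ENNReal) * Q (B σ ∩ C σ) = Q (C σ) := by
    intro σ
    have hterm : ∀ τ : Equiv.Perm (Fin n),
        Q (B σ ∩ C σ) = Q (B (σ.trans τ) ∩ C σ ∩ D) := by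
      intro τ
      conv_lhs => rw [← hT τ]
      rw [Measure.map_apply (hTmeas τ) ((hBmeas σ).inter (hCmeas σ))]
      rw [← hrestrict ((fun x => x ∘ τ) ⁻¹' (B σ ∩ C σ))]
      congr 1
      ext x
      simp only [Set.mem_inter_iff, Set.mem_preimage, hBdef, hCdef, hDdef, Set.mem_setOf_eq]
      constructor
      · rintro ⟨⟨hB1, hC1⟩, hD1⟩
        refine ⟨⟨?_, by rwa [Fsig_comp] at hC1⟩, hD1⟩
        rw [sortDesc_comp_of_injective hD1 τ] at hB1
        rw [← hB1, Equiv.trans_assoc]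
        ext i; simp
      · rintro ⟨⟨hB1, hC1⟩, hD1⟩
        refine ⟨⟨?_, by rwa [Fsig_comp]⟩, hD1⟩
        rw [sortDesc_comp_of_injective hD1 τ, hB1, Equiv.trans_assoc]
        ext i; simp
    calc (Nat.factorial n : ENNReal) * Q (B σ ∩ C σ)
        = ∑ _τ : Equiv.Perm (Fin n), Q (B σ ∩ C σ) := by
          rw [Finset.sum_const, Finset.card_univ, Fintype.card_perm, Fintype.card_fin, nsmul_eq_mul]
      _ = ∑ τ : Equiv.Perm (Fin n), Q (B (σ.trans τ) ∩ (C σ ∩ D)) := by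
          refine Finset.sum_congr rfl fun τ _ => ?_
          rw [hterm τ, Set.inter_assoc]
      _ = ∑ ρ : Equiv.Perm (Fin n), Q (B ρ ∩ (C σ ∩ D)) := by
          refine Fintype.sum_equiv (Equiv.mulRight σ) _ _ fun τ => ?_
          have h : (Equiv.mulRight σ) τ = σ.trans τ := rfl
          rw [h]
      _ = Q (C σ ∩ D) := hBunion _ ((hCmeas σ).inter hDmeas)
      _ = Q (C σ) := hrestrict _
  -- decompose the Choquet event according to rankings
  have hsplit : {ω | choquet ν (fun i => X i ω) ≤ y}
      = ⋃ σ ∈ (Finset.univ : Finset (Equiv.Perm (Fin n))), φ ⁻¹' (B σ ∩ C σ) := by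
    ext ω
    constructor
    · intro h
      simp only [Set.mem_iUnion]
      refine ⟨sortDesc (fun i => X i ω), Finset.mem_univ _, rfl, ?_⟩
      show Fsig ν (sortDesc (fun i => X i ω)) (φ ω) ≤ y
      rw [← choquet_eq_Fsig]
      exact h
    · intro h
      simp only [Set.mem_iUnion] at h
      obtain ⟨σ, _, hσ, h2⟩ := h
      show choquet ν (fun i => X i ω) ≤ y
      rw [choquet_eq_Fsig]
      have hσ' : sortDesc (fun i => X i ω) = σ := hσ
      rw [hσ']
      exact h2
  have hPBC : ∀ σ, P (φ ⁻¹' (B σ ∩ C σ)) = Q (B σ ∩ C σ) := by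
    intro σ
    rw [hQ, Measure.map_apply hφ ((hBmeas σ).inter (hCmeas σ))]
  have hPC : ∀ σ : Equiv.Perm (Fin n), P {ω | Ysig ν σ X ω ≤ y} = Q (C σ) := by
    intro σ
    rw [hQ, Measure.map_apply hφ (hCmeas σ)]
    congr 1
  have hPsum : P {ω | choquet ν (fun i => X i ω) ≤ y}
      = ∑ σ : Equiv.Perm (Fin n), Q (B σ ∩ C σ) := by
    rw [hsplit]
    rw [measure_biUnion_finset ?_ (fun σ _ => hφ ((hBmeas σ).inter (hCmeas σ)))]
    · exact Finset.sum_congr rfl fun σ _ => hPBC σ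
    · intro σ _ σ' _ hne
      refine Set.disjoint_left.mpr fun ω hω hω' => ?_
      exact hne (hω.1.symm.trans hω'.1)
  -- pass to real numbers
  have hfact : (Nat.factorial n : ℝ) ≠ 0 := Nat.cast_ne_zero.mpr n.factorial_ne_zero
  have hne_top : ∀ σ, Q (B σ ∩ C σ) ≠ ⊤ := fun σ => measure_ne_top Q _
  have hreal : ∀ σ : Equiv.Perm (Fin n),
      (Q (B σ ∩ C σ)).toReal = (1 / (Nat.factorial n : ℝ)) * (Q (C σ)).toReal := by
    intro σ
    have h := congrArg ENNReal.toReal (key σ)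
    rw [ENNReal.toReal_mul, ENNReal.toReal_natCast] at h
    rw [← h]
    field_simp
  rw [hPsum, ENNReal.toReal_sum (fun σ _ => hne_top σ), Finset.mul_sum]
  refine Finset.sum_congr rfl fun σ _ => ?_
  rw [hreal σ, hPC σ]

end ChoquetPaper
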